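/- For all integers b ≥ 2 and n ≥ 2, the following identity holds in the rational numbers: Σ_{i=1}^{b−1} Σ_{j=1}^{n−2} (1/(i(b−i))) · C(j, i−1) · C(j−1, i−1) · C(n−1−j, b−i−1) · C(n−2−j, b−i−1) = (2/b) · C(n−1, b−2) · C(n−2, b−1). -/

import Mathlib

noncomputable section StmtAux
open PowerSeries

def nara (m k : ℕ) : ℚ :=
  if k = 0 then 0 else (m.choose k : ℚ) * (m.choose (k-1) : ℚ) / m

lemma nara_zero_right (m : ℕ) : nara m 0 = 0 := by simp [nara]

lemma nara_zero_left (k : ℕ) : nara 0 k = 0 := by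
  rcases k with _ | k <;> simp [nara]

lemma nara_of_lt {m k : ℕ} (h : m < k) : nara m k = 0 := by
  rcases k with _ | k
  · simp [nara]
  · simp [nara, Nat.choose_eq_zero_of_lt h]

lemma nara_eq {m k : ℕ} (h1 : 1 ≤ k) (h2 : k ≤ m) :
    nara m k = (m.factorial : ℚ) * m.factorial /
      (m * (k.factorial * (k-1).factorial * (m-k).factorial * (m-k+1).factorial)) := by
  have hk : k ≠ 0 := by omega
  have h3 : k - 1 ≤ m := by omega
  rw [nara, if_neg hk, Nat.cast_choose ℚ h2, Nat.cast_choose ℚ h3]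
  have : m - (k-1) = m - k + 1 := by omega
  rw [this]
  field_simp

lemma fact_ne (c : ℕ) : ((c.factorial : ℚ)) ≠ 0 := by exact_mod_cast Nat.factorial_ne_zero c

lemma fact_peel (a : ℕ) : (((a+1).factorial : ℚ)) = ((a:ℚ)+1) * (a.factorial : ℚ) := by
  rw [Nat.factorial_succ]; push_cast; ring

lemma nara_off (x y : ℕ) : nara (x+y+1) (x+1) =
    ((x+y+1).factorial : ℚ)^2 /
      (((x:ℚ)+(y:ℚ)+1)*((x:ℚ)+1)*((y:ℚ)+1)*((x.factorial:ℚ))^2*((y.factorial:ℚ))^2) := by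
  rw [nara_eq (by omega) (by omega)]
  simp only [show x+1-1 = x from by omega, show x+y+1-(x+1) = y from by omega]
  simp only [Nat.factorial_succ]
  push_cast
  have h1 := fact_ne x; have h2 := fact_ne y
  field_simp

lemma nara_self {m : ℕ} (h : 1 ≤ m) : nara m m = 1 := by
  have h2 : m.choose (m-1) = m := by
    rw [← Nat.choose_symm (by omega : m-1 ≤ m), show m-(m-1) = 1 from by omega,
      Nat.choose_one_right]
  rw [nara, if_neg (by omega), Nat.choose_self, h2]
  have : (m:ℚ) ≠ 0 := by exact_mod_cast (by omega : m ≠ 0)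
  field_simp
  norm_num

lemma nara_one {a : ℕ} (h : 1 ≤ a) : nara a 1 = 1 := by
  rw [nara, if_neg (by omega)]
  simp only [Nat.choose_one_right, show (1:ℕ)-1 = 0 from rfl, Nat.choose_zero_right]
  have : (a:ℚ) ≠ 0 := by exact_mod_cast (by omega : a ≠ 0)
  field_simp
  norm_num

lemma nara_two' (a : ℕ) : nara (a+1) 2 = ((a:ℚ)+1)*(a:ℚ)/2 := by
  rcases a with _ | e
  · simp [nara]
  · have t := nara_off 1 e
    rw [show 1+e+1 = e+1+1 from by omega, show (1:ℕ)+1 = 2 from rfl] at t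
    rw [t, show e+1+1 = (e+1)+1 from rfl, fact_peel, fact_peel]
    have h1 := fact_ne e
    have h2 : ((e:ℚ)+1) ≠ 0 := by positivity
    have h3 : ((1:ℚ)+(e:ℚ)+1) ≠ 0 := by positivity
    push_cast
    field_simp
    ring

lemma nara_succ_self (a : ℕ) : nara (a+2) (a+1) = ((a:ℚ)+2)*((a:ℚ)+1)/2 := by
  have t := nara_off a 1
  rw [show a+1+1 = a+2 from rfl] at t
  rw [t, show a+2 = (a+1)+1 from rfl, fact_peel, fact_peel]
  have h1 := fact_ne a
  have h2 : ((a:ℚ)+1) ≠ 0 := by positivity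
  have h3 : ((a:ℚ)+(1:ℚ)+1) ≠ 0 := by positivity
  push_cast
  simp only [Nat.factorial_one, Nat.cast_one]
  field_simp
  ring

set_option maxHeartbeats 1000000 in
lemma grindA_generic (c d : ℕ) :
    ((c:ℚ)+(d:ℚ)+6) * nara ((c+d+3)+2) (c+3) =
    (2*((c:ℚ)+(d:ℚ))+9) * (nara ((c+d+3)+1) (c+3) + nara ((c+d+3)+1) (c+2))
    - ((c:ℚ)+(d:ℚ)+3) * (nara (c+d+3) (c+3) - 2 * nara (c+d+3) (c+2) + nara (c+d+3) (c+1)) := by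
  have hc := fact_ne c; have hd := fact_ne d; have hcd := fact_ne (c+d+3)
  have e0 : ((c:ℚ)+(d:ℚ)+3) ≠ 0 := by positivity
  have e1 : ((c:ℚ)+1) ≠ 0 := by positivity
  have e2 : ((c:ℚ)+2) ≠ 0 := by positivity
  have e3 : ((c:ℚ)+3) ≠ 0 := by positivity
  have e4 : ((d:ℚ)+1) ≠ 0 := by positivity
  have e5 : ((d:ℚ)+2) ≠ 0 := by positivity
  have e6 : ((d:ℚ)+3) ≠ 0 := by positivity
  have e7 : ((c:ℚ)+(d:ℚ)+4) ≠ 0 := by positivity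
  have e8 : ((c:ℚ)+(d:ℚ)+5) ≠ 0 := by positivity
  set Cf : ℚ := ((c+d+3).factorial : ℚ) with hCf
  set cf : ℚ := (c.factorial : ℚ) with hcf
  set df : ℚ := (d.factorial : ℚ) with hdf
  set Dq : ℚ := ((c:ℚ)+(d:ℚ)+3) * (((c:ℚ)+1)^2*((c:ℚ)+2)^2*((c:ℚ)+3)*((d:ℚ)+1)^2*((d:ℚ)+2)^2*((d:ℚ)+3)) * cf^2 * df^2 with hDq
  have hDqne : Dq ≠ 0 := by rw [hDq]; positivity
  -- peeled factorial facts
  have pA5 : (((c+d+3+2).factorial : ℚ)) = ((c:ℚ)+(d:ℚ)+5)*(((c:ℚ)+(d:ℚ)+4)) * Cf := by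
    rw [show c+d+3+2 = (c+d+3+1)+1 from rfl, fact_peel, fact_peel]; push_cast; ring
  have pA4 : (((c+d+3+1).factorial : ℚ)) = ((c:ℚ)+(d:ℚ)+4) * Cf := by
    rw [fact_peel]; push_cast; ring
  have pc1 : (((c+1).factorial : ℚ)) = ((c:ℚ)+1) * cf := by rw [fact_peel]
  have pc2 : (((c+2).factorial : ℚ)) = ((c:ℚ)+2)*((c:ℚ)+1) * cf := by
    rw [show c+2 = (c+1)+1 from rfl, fact_peel, fact_peel]; push_cast; ring
  have pd1 : (((d+1).factorial : ℚ)) = ((d:ℚ)+1) * df := by rw [fact_peel]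
  have pd2 : (((d+2).factorial : ℚ)) = ((d:ℚ)+2)*((d:ℚ)+1) * df := by
    rw [show d+2 = (d+1)+1 from rfl, fact_peel, fact_peel]; push_cast; ring
  have t1 : nara (c+d+3+2) (c+3)
      = Cf^2 * (((c:ℚ)+(d:ℚ)+3)*((c:ℚ)+(d:ℚ)+4)^2*((c:ℚ)+(d:ℚ)+5)) / Dq := by
    have t := nara_off (c+2) (d+2)
    rw [show (c+2)+(d+2)+1 = c+d+3+2 from by omega] at t
    rw [show (c+2)+1 = c+3 from by omega] at t
    rw [t, pA5, pc2, pd2, hDq]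
    push_cast
    field_simp
    ring
  have t2 : nara (c+d+3+1) (c+3)
      = Cf^2 * (((c:ℚ)+(d:ℚ)+3)*((c:ℚ)+(d:ℚ)+4)*((d:ℚ)+2)*((d:ℚ)+3)) / Dq := by
    have t := nara_off (c+2) (d+1)
    rw [show (c+2)+(d+1)+1 = c+d+3+1 from by omega] at t
    rw [show (c+2)+1 = c+3 from by omega] at t
    rw [t, pA4, pc2, pd1, hDq]
    push_cast
    field_simp
    ring
  have t3 : nara (c+d+3+1) (c+2)
      = Cf^2 * (((c:ℚ)+(d:ℚ)+3)*((c:ℚ)+(d:ℚ)+4)*((c:ℚ)+2)*((c:ℚ)+3)) / Dq := by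
    have t := nara_off (c+1) (d+2)
    rw [show (c+1)+(d+2)+1 = c+d+3+1 from by omega] at t
    rw [show (c+1)+1 = c+2 from by omega] at t
    rw [t, pA4, pc1, pd2, hDq]
    push_cast
    field_simp
    ring
  have t4 : nara (c+d+3) (c+3)
      = Cf^2 * (((d:ℚ)+1)*((d:ℚ)+2)^2*((d:ℚ)+3)) / Dq := by
    have t := nara_off (c+2) d
    rw [show (c+2)+d+1 = c+d+3 from by omega] at t
    rw [show (c+2)+1 = c+3 from by omega] at t
    rw [t, pc2, hDq]
    push_cast
    field_simp
    ring
  have t5 : nara (c+d+3) (c+2)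
      = Cf^2 * (((c:ℚ)+2)*((c:ℚ)+3)*((d:ℚ)+2)*((d:ℚ)+3)) / Dq := by
    have t := nara_off (c+1) (d+1)
    rw [show (c+1)+(d+1)+1 = c+d+3 from by omega] at t
    rw [show (c+1)+1 = c+2 from by omega] at t
    rw [t, pc1, pd1, hDq]
    push_cast
    field_simp
    ring
  have t6 : nara (c+d+3) (c+1)
      = Cf^2 * (((c:ℚ)+1)*((c:ℚ)+2)^2*((c:ℚ)+3)) / Dq := by
    have t := nara_off c (d+2)
    rw [show c+(d+2)+1 = c+d+3 from by omega] at t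
    rw [t, pd2, hDq]
    push_cast
    field_simp
    ring
  rw [t1, t2, t3, t4, t5, t6]
  field_simp
  ring

lemma nara_rec (s k : ℕ) :
    ((s:ℚ)+4) * nara (s+3) k
      = (2*(s:ℚ)+5) * (nara (s+2) k + nara (s+2) (k-1))
        - ((s:ℚ)+1) * (nara (s+1) k - 2 * nara (s+1) (k-1) + nara (s+1) (k-2)) := by
  rcases k with _ | _ | _ | c
  · simp only [nara_zero_right, show (0:ℕ)-1 = 0 from rfl, show (0:ℕ)-2 = 0 from rfl]
    ring
  · simp only [show (1:ℕ)-1 = 0 from rfl, show (1:ℕ)-2 = 0 from rfl, nara_zero_right]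
    rw [nara_one (by omega), nara_one (by omega), nara_one (by omega)]
    ring
  · simp only [show (2:ℕ)-1 = 1 from rfl, show (2:ℕ)-2 = 0 from rfl, nara_zero_right]
    have b1 := nara_two' (s+2)
    rw [show s+2+1 = s+3 from rfl] at b1
    have b2 := nara_two' (s+1)
    rw [show s+1+1 = s+2 from rfl] at b2
    have b3 := nara_two' s
    rw [b1, b2, b3, nara_one (by omega : 1 ≤ s+2), nara_one (by omega : 1 ≤ s+1)]
    push_cast
    ring
  · simp only [show c+3-1 = c+2 from by omega, show c+3-2 = c+1 from by omega]
    rcases Nat.lt_or_ge (s+1) (c+2) with h | h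
    · rcases Nat.lt_or_ge (s+1) c with h2 | h2
      · rw [nara_of_lt (by omega), nara_of_lt (by omega), nara_of_lt (by omega),
          nara_of_lt (by omega), nara_of_lt (by omega), nara_of_lt (by omega)]
        ring
      · rcases Nat.eq_or_lt_of_le h2 with h3 | h3
        · -- c = s+1, k = s+4
          have hc : c = s+1 := by omega
          subst hc
          rw [nara_of_lt (by omega), nara_of_lt (by omega), nara_of_lt (by omega),
            nara_of_lt (by omega), nara_of_lt (by omega), nara_of_lt (by omega)]
          ring
        · -- c = s, k = s+3
          have hc : c = s := by omega
          subst hc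
          rw [nara_self (by omega), nara_of_lt (by omega), nara_self (by omega),
            nara_of_lt (by omega), nara_of_lt (by omega), nara_self (by omega)]
          ring
    · rcases Nat.eq_or_lt_of_le h with h2 | h2
      · -- c+2 = s+1 : s = c+1, k = s+2
        have hs : s = c+1 := by omega
        subst hs
        have a1 := nara_succ_self (c+2)
        rw [show c+2+2 = c+1+3 from by omega, show c+2+1 = c+3 from by omega] at a1
        have a2 : nara (c+1+2) (c+3) = 1 := by
          rw [show c+1+2 = c+3 from by omega]; exact nara_self (by omega)
        have a3 := nara_succ_self (c+1)
        rw [show c+1+2 = c+1+2 from rfl, show c+1+1 = c+2 from by omega] at a3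
        have a4 : nara (c+1+1) (c+3) = 0 := nara_of_lt (by omega)
        have a5 : nara (c+1+1) (c+2) = 1 := by
          rw [show c+1+1 = c+2 from by omega]; exact nara_self (by omega)
        have a6 := nara_succ_self c
        rw [show c+2 = c+1+1 from by omega] at a6
        rw [a1, a2, a3, a4, a5, a6]
        push_cast
        ring
      · -- generic : c+2 ≤ s
        obtain ⟨d, rfl⟩ : ∃ d, s = c+d+2 := ⟨s-c-2, by omega⟩
        have hg := grindA_generic c d
        rw [show c+d+3+2 = c+d+2+3 from by omega, show c+d+3+1 = c+d+2+2 from by omega,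
          show c+d+3 = c+d+2+1 from by omega] at hg
        push_cast
        linear_combination hg

set_option maxHeartbeats 1000000 in
lemma grindB_generic (c e : ℕ) :
    nara (c+e+3) (c+2) - nara (c+e+2) (c+2) - nara (c+e+2) (c+1)
      = 2/((c:ℚ)+2) * (((c+e+2).choose c : ℕ) : ℚ) * (((c+e+1).choose (c+1) : ℕ) : ℚ) := by
  have hc := fact_ne c; have he := fact_ne e; have hCf := fact_ne (c+e+1)
  have e1 : ((c:ℚ)+1) ≠ 0 := by positivity
  have e2 : ((c:ℚ)+2) ≠ 0 := by positivity
  have e3 : ((e:ℚ)+1) ≠ 0 := by positivity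
  have e4 : ((e:ℚ)+2) ≠ 0 := by positivity
  have e5 : ((c:ℚ)+(e:ℚ)+2) ≠ 0 := by positivity
  have e6 : ((c:ℚ)+(e:ℚ)+3) ≠ 0 := by positivity
  set Cf : ℚ := ((c+e+1).factorial : ℚ) with hCfdef
  set cf : ℚ := (c.factorial : ℚ) with hcfdef
  set ef : ℚ := (e.factorial : ℚ) with hefdef
  set Dq : ℚ := (((c:ℚ)+1)^2*((c:ℚ)+2)*((e:ℚ)+1)^2*((e:ℚ)+2)) * cf^2 * ef^2 with hDqdef
  have pA3 : (((c+e+3).factorial : ℚ)) = ((c:ℚ)+(e:ℚ)+3)*((c:ℚ)+(e:ℚ)+2) * Cf := by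
    rw [show c+e+3 = (c+e+2)+1 from rfl, fact_peel, show c+e+2 = (c+e+1)+1 from rfl, fact_peel]
    push_cast; ring
  have pA2 : (((c+e+2).factorial : ℚ)) = ((c:ℚ)+(e:ℚ)+2) * Cf := by
    rw [show c+e+2 = (c+e+1)+1 from rfl, fact_peel]; push_cast; ring
  have pc1 : (((c+1).factorial : ℚ)) = ((c:ℚ)+1) * cf := by rw [fact_peel]
  have pe1 : (((e+1).factorial : ℚ)) = ((e:ℚ)+1) * ef := by rw [fact_peel]
  have pe2 : (((e+2).factorial : ℚ)) = ((e:ℚ)+2)*((e:ℚ)+1) * ef := by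
    rw [show e+2 = (e+1)+1 from rfl, fact_peel, fact_peel]; push_cast; ring
  have t1 : nara (c+e+3) (c+2)
      = Cf^2 * (((c:ℚ)+(e:ℚ)+3)*((c:ℚ)+(e:ℚ)+2)^2) / Dq := by
    have t := nara_off (c+1) (e+1)
    rw [show (c+1)+(e+1)+1 = c+e+3 from by omega] at t
    rw [show (c+1)+1 = c+2 from by omega] at t
    rw [t, pA3, pc1, pe1, hDqdef]
    push_cast; field_simp; ring
  have t2 : nara (c+e+2) (c+2)
      = Cf^2 * (((c:ℚ)+(e:ℚ)+2)*((e:ℚ)+1)*((e:ℚ)+2)) / Dq := by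
    have t := nara_off (c+1) e
    rw [show (c+1)+e+1 = c+e+2 from by omega] at t
    rw [show (c+1)+1 = c+2 from by omega] at t
    rw [t, pA2, pc1, hDqdef]
    push_cast; field_simp; ring
  have t3 : nara (c+e+2) (c+1)
      = Cf^2 * (((c:ℚ)+(e:ℚ)+2)*((c:ℚ)+1)*((c:ℚ)+2)) / Dq := by
    have t := nara_off c (e+1)
    rw [show c+(e+1)+1 = c+e+2 from by omega] at t
    rw [t, pA2, pe1, hDqdef]
    push_cast; field_simp; ring
  have r1 : (((c+e+2).choose c : ℕ) : ℚ) = ((c:ℚ)+(e:ℚ)+2) * Cf / (cf * (((e:ℚ)+2)*((e:ℚ)+1) * ef)) := by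
    rw [Nat.cast_choose ℚ (by omega : c ≤ c+e+2), show c+e+2-c = e+2 from by omega, pA2, pe2]
  have r2 : (((c+e+1).choose (c+1) : ℕ) : ℚ) = Cf / ((((c:ℚ)+1) * cf) * ef) := by
    rw [Nat.cast_choose ℚ (by omega : c+1 ≤ c+e+1), show c+e+1-(c+1) = e from by omega, pc1]
  rw [t1, t2, t3, r1, r2, hDqdef]
  field_simp
  ring

lemma final_id {b n : ℕ} (hb : 2 ≤ b) (hn : 2 ≤ n) :
    nara n b - nara (n-1) b - nara (n-1) (b-1)
      = 2/(b:ℚ) * (((n-1).choose (b-2) : ℕ) : ℚ) * (((n-2).choose (b-1) : ℕ) : ℚ) := by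
  rcases Nat.lt_or_ge n b with h | h
  · rw [nara_of_lt (by omega), nara_of_lt (by omega), nara_of_lt (by omega),
      Nat.choose_eq_zero_of_lt (by omega : n-2 < b-1)]
    push_cast; ring
  · rcases Nat.eq_or_lt_of_le h with h2 | h2
    · -- n = b
      subst h2
      rw [nara_self (by omega), nara_of_lt (by omega), nara_self (by omega),
        Nat.choose_eq_zero_of_lt (by omega : b-2 < b-1)]
      push_cast; ring
    · -- b < n
      obtain ⟨c, e, rfl, rfl⟩ : ∃ c e, b = c+2 ∧ n = c+e+3 :=
        ⟨b-2, n-1-b, by omega, by omega⟩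
      simp only [show c+e+3-1 = c+e+2 from by omega, show c+e+3-2 = c+e+1 from by omega,
        show c+2-1 = c+1 from by omega, show c+2-2 = c from by omega]
      have hg := grindB_generic c e
      push_cast
      linear_combination hg

/-- Narayana polynomial. -/
def narp (m : ℕ) : Polynomial ℚ :=
  ∑ k ∈ Finset.range (m+1), Polynomial.C (nara m k) * Polynomial.X ^ k

lemma narp_coeff (m k : ℕ) : (narp m).coeff k = nara m k := by
  unfold narp
  rw [Polynomial.finset_sum_coeff]
  simp only [Polynomial.coeff_C_mul, Polynomial.coeff_X_pow, mul_ite, mul_one, mul_zero]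
  rcases Nat.lt_or_ge k (m+1) with h | h
  · rw [Finset.sum_eq_single k]
    · simp
    · intro j _ hj; simp [Ne.symm hj]
    · intro hk; exact absurd (Finset.mem_range.mpr h) hk
  · rw [Finset.sum_eq_zero, nara_of_lt (by omega)]
    intro j hj
    have : k ≠ j := by simp at hj; omega
    simp [this]

lemma narp_zero : narp 0 = 0 := by
  unfold narp; simp [nara]

lemma narp_rec (s : ℕ) :
    ((s+4 : ℕ) : Polynomial ℚ) * narp (s+3) + ((s+1 : ℕ) : Polynomial ℚ) * ((1-Polynomial.X)^2 * narp (s+1))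
      = ((2*s+5 : ℕ) : Polynomial ℚ) * ((1+Polynomial.X) * narp (s+2)) := by
  have E1 : (1+Polynomial.X) * narp (s+2) = narp (s+2) + Polynomial.X * narp (s+2) := by ring
  have E2 : (1-Polynomial.X)^2 * narp (s+1)
      = narp (s+1) - 2*(Polynomial.X * narp (s+1)) + Polynomial.X^2 * narp (s+1) := by ring
  rw [E1, E2]
  ext k
  simp only [Polynomial.coeff_add, Polynomial.coeff_sub, Polynomial.coeff_natCast_mul,
    Polynomial.coeff_X_pow_mul', Polynomial.coeff_ofNat_mul, narp_coeff]
  rcases k with _ | _ | k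
  · -- k = 0
    simp only [show ¬ (2 ≤ 0) from by omega, if_false]
    have h0 : (Polynomial.X * narp (s+2)).coeff 0 = 0 := by
      rw [mul_comm, Polynomial.mul_coeff_zero]; simp
    have h1 : (Polynomial.X * narp (s+1)).coeff 0 = 0 := by
      rw [mul_comm, Polynomial.mul_coeff_zero]; simp
    rw [h0, h1]
    simp only [nara_zero_right]
    push_cast; ring
  · -- k = 1
    simp only [show ¬ (2 ≤ 1) from by omega, if_false]
    rw [Polynomial.coeff_X_mul, Polynomial.coeff_X_mul, narp_coeff, narp_coeff]
    simp only [nara_zero_right]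
    have := nara_rec s 1
    simp only [show (1:ℕ)-1 = 0 from rfl, show (1:ℕ)-2 = 0 from rfl, nara_zero_right] at this
    push_cast
    linear_combination this
  · -- k+2
    simp only [show 2 ≤ k+2 from by omega, if_true, show k+2-2 = k from rfl]
    rw [show k+2 = (k+1)+1 from rfl, Polynomial.coeff_X_mul, Polynomial.coeff_X_mul,
      narp_coeff, narp_coeff]
    have := nara_rec s (k+2)
    simp only [show k+2-1 = k+1 from rfl, show k+2-2 = k from rfl] at this
    push_cast
    linear_combination this

/-- Segner-style recursively defined sequence of polynomials. -/
def qs : ℕ → Polynomial ℚ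
  | 0 => 0
  | (m+1) => (if m = 0 then Polynomial.X else 0) + (1 + Polynomial.X) * qs m +
      ∑ j ∈ Finset.range m, qs (min (j+1) m) * qs (m - (j+1))
  decreasing_by all_goals omega

lemma qs_succ (m : ℕ) : qs (m+1) = (if m = 0 then Polynomial.X else 0) + (1 + Polynomial.X) * qs m +
    ∑ j ∈ Finset.range (m+1), qs j * qs (m - j) := by
  rw [qs]
  congr 1
  rw [Finset.sum_range_succ', show qs 0 = 0 by rw [qs], zero_mul, add_zero]
  exact (Finset.sum_congr rfl fun j hj => by
    rw [min_eq_left (by simp at hj; omega)]).symm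

abbrev R := Polynomial ℚ

def G : R⟦X⟧ := PowerSeries.mk qs
def T : R⟦X⟧ := PowerSeries.C (R := R) Polynomial.X

lemma hqG : G = X * T + X * ((1+T) * G) + X * (G * G) := by
  ext n
  rcases n with _ | m
  · simp only [coeff_zero_eq_constantCoeff, map_add, map_mul, constantCoeff_X, zero_mul]
    simp [G, qs]
  · simp only [map_add, coeff_succ_X_mul]
    rw [show (1:R⟦X⟧) + T = PowerSeries.C (R := R) (1 + Polynomial.X) by simp [T, map_add, map_one]]
    rw [PowerSeries.coeff_C_mul]
    rw [show T = PowerSeries.C (R := R) Polynomial.X from rfl, PowerSeries.coeff_C]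
    rw [PowerSeries.coeff_mul]
    simp only [G, PowerSeries.coeff_mk]
    rw [Finset.Nat.sum_antidiagonal_eq_sum_range_succ (fun a b => qs a * qs b)]
    rw [qs_succ]


lemma hd_G : d⁄dX R G = T + ((1+T)*G + X*((1+T)*(d⁄dX R G))) + (G*G + X*(G*(d⁄dX R G)+G*(d⁄dX R G))) := by
  have d1 : d⁄dX R (X * T) = T := by
    rw [show T = PowerSeries.C (R := R) Polynomial.X from rfl]
    simp [Derivation.leibniz, smul_eq_mul]
  have d2 : d⁄dX R (X * ((1+T)*G)) = (1+T)*G + X*((1+T)*(d⁄dX R G)) := by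
    rw [show T = PowerSeries.C (R := R) Polynomial.X from rfl]
    simp [Derivation.leibniz, smul_eq_mul]
    ring
  have d3 : d⁄dX R (X * (G*G)) = G*G + X*(G*(d⁄dX R G)+G*(d⁄dX R G)) := by
    simp [Derivation.leibniz, smul_eq_mul]
    ring
  conv_lhs => rw [hqG]
  rw [map_add, map_add, d1, d2, d3]

lemma hODE : X * (d⁄dX R G) + (1-T)^2 * (X^3 * (d⁄dX R G)) + G
    = (2*(1+T)) * (X^2 * (d⁄dX R G)) + (1+T) * (X*G) + (2*T) * X := by
  have e2 : X * (d⁄dX R G) * (1 - (1+T)*X - 2*(X*G)) = G := by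
    linear_combination (X : R⟦X⟧) * hd_G - hqG
  linear_combination (1 - (1+T)*X - 2*(X*G)) * e2 + (4*X^2*(d⁄dX R G) + 2) * hqG

lemma qs_rec (s : ℕ) :
    ((s+4 : ℕ) : R) * qs (s+3) + ((s+1 : ℕ) : R) * ((1-Polynomial.X)^2 * qs (s+1))
      = ((2*s+5 : ℕ) : R) * ((1+Polynomial.X) * qs (s+2)) := by
  have hcoef := congrArg (⇑(PowerSeries.coeff (R := R) (s+3))) hODE
  simp only [map_add] at hcoef
  have c1 : (PowerSeries.coeff (R := R) (s+3)) (X * (d⁄dX R G)) = qs (s+3) * ((s+3 : ℕ) : R) := by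
    rw [show s+3 = (s+2)+1 from rfl, coeff_succ_X_mul, PowerSeries.coeff_derivative]
    simp [G]
  have c2 : (PowerSeries.coeff (R := R) (s+3)) ((1-T)^2 * (X^3 * (d⁄dX R G)))
      = (1-Polynomial.X)^2 * (qs (s+1) * ((s+1 : ℕ) : R)) := by
    rw [show (1-T)^2 = PowerSeries.C (R := R) ((1-Polynomial.X)^2) by
      rw [show T = PowerSeries.C (R := R) Polynomial.X from rfl]; simp]
    rw [PowerSeries.coeff_C_mul, PowerSeries.coeff_X_pow_mul (d⁄dX R G) 3 s,
      PowerSeries.coeff_derivative]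
    simp only [G, PowerSeries.coeff_mk]
    push_cast
    ring
  have c3 : (PowerSeries.coeff (R := R) (s+3)) G = qs (s+3) := by simp [G]
  have c4 : (PowerSeries.coeff (R := R) (s+3)) ((2*(1+T)) * (X^2 * (d⁄dX R G)))
      = 2*(1+Polynomial.X) * (qs (s+2) * ((s+2 : ℕ) : R)) := by
    rw [show (2*(1+T) : R⟦X⟧) = PowerSeries.C (R := R) (2*(1+Polynomial.X)) by
      rw [show T = PowerSeries.C (R := R) Polynomial.X from rfl]
      simp [map_ofNat]]
    rw [PowerSeries.coeff_C_mul, PowerSeries.coeff_X_pow_mul (d⁄dX R G) 2 (s+1),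
      PowerSeries.coeff_derivative]
    simp only [G, PowerSeries.coeff_mk]
    push_cast
    ring
  have c5 : (PowerSeries.coeff (R := R) (s+3)) ((1+T) * (X*G)) = (1+Polynomial.X) * qs (s+2) := by
    rw [show (1+T : R⟦X⟧) = PowerSeries.C (R := R) (1+Polynomial.X) by
      rw [show T = PowerSeries.C (R := R) Polynomial.X from rfl]; simp]
    rw [PowerSeries.coeff_C_mul, show s+3 = (s+2)+1 from rfl, coeff_succ_X_mul]
    simp [G]
  have c6 : (PowerSeries.coeff (R := R) (s+3)) ((2*T) * X) = 0 := by
    rw [show (2*T : R⟦X⟧) = PowerSeries.C (R := R) (2*Polynomial.X) by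
      rw [show T = PowerSeries.C (R := R) Polynomial.X from rfl]
      simp [map_ofNat]]
    rw [PowerSeries.coeff_C_mul, PowerSeries.coeff_X]
    simp
  rw [c1, c2, c3, c4, c5, c6] at hcoef
  push_cast at hcoef ⊢
  linear_combination hcoef

lemma qs_zero : qs 0 = 0 := by rw [qs]

lemma qs_one : qs 1 = Polynomial.X := by
  rw [show (1:ℕ) = 0+1 from rfl, qs_succ]
  simp [qs_zero]

lemma qs_two : qs 2 = Polynomial.X + Polynomial.X^2 := by
  rw [show (2:ℕ) = 1+1 from rfl, qs_succ]
  simp [Finset.sum_range_succ, qs_zero, qs_one]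
  ring

lemma qs_eq_narp : ∀ m, qs m = narp m := by
  intro m
  induction m using Nat.strong_induction_on with
  | _ m ih =>
    rcases m with _ | _ | _ | m
    · simp [qs_zero, narp_zero]
    · have hn1 : narp 1 = Polynomial.X := by
        norm_num [narp, Finset.sum_range_succ, nara]
      rw [qs_one, hn1]
    · have hn2 : narp 2 = Polynomial.X + Polynomial.X^2 := by
        norm_num [narp, Finset.sum_range_succ, nara]
      rw [qs_two, hn2]
    · have h1 := qs_rec m
      have h2 := narp_rec m
      rw [ih (m+2) (by omega), ih (m+1) (by omega)] at h1
      have hcan : ((m+4 : ℕ) : Polynomial ℚ) * qs (m+3) = ((m+4 : ℕ) : Polynomial ℚ) * narp (m+3) := by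
        linear_combination h1 - h2
      have hne : ((m+4 : ℕ) : Polynomial ℚ) ≠ 0 := Nat.cast_ne_zero.mpr (by omega)
      exact mul_left_cancel₀ hne hcan

lemma narp_conv (n : ℕ) (hn : 2 ≤ n) :
    narp n = (1+Polynomial.X) * narp (n-1)
      + ∑ j ∈ Finset.range n, narp j * narp (n-1-j) := by
  obtain ⟨m, rfl⟩ : ∃ m, n = (m+1)+1 := ⟨n-2, by omega⟩
  have h := qs_succ (m+1)
  rw [if_neg (show ¬ (m+1 = 0) from by omega)] at h
  simp only [qs_eq_narp] at h
  rw [zero_add] at h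
  rw [show (m+1)+1 = m+2 from rfl] at h
  rw [h, show m+2-1 = m+1 from rfl]

lemma conv_coeff (n b : ℕ) (hn : 2 ≤ n) (hb : 1 ≤ b) :
    (∑ j ∈ Finset.range n, ∑ i ∈ Finset.range (b+1), nara j i * nara (n-1-j) (b-i))
      = nara n b - nara (n-1) b - nara (n-1) (b-1) := by
  have h := congrArg (fun p => Polynomial.coeff p b) (narp_conv n hn)
  simp only [Polynomial.coeff_add, Polynomial.finset_sum_coeff] at h
  obtain ⟨b', rfl⟩ : ∃ b', b = b'+1 := ⟨b-1, by omega⟩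
  have hx : ((1+Polynomial.X) * narp (n-1)).coeff (b'+1)
      = nara (n-1) (b'+1) + nara (n-1) b' := by
    have : (1+Polynomial.X) * narp (n-1) = narp (n-1) + Polynomial.X * narp (n-1) := by ring
    rw [this, Polynomial.coeff_add, Polynomial.coeff_X_mul, narp_coeff, narp_coeff]
  rw [narp_coeff, hx] at h
  have hmul : ∀ j, (narp j * narp (n-1-j)).coeff (b'+1)
      = ∑ i ∈ Finset.range (b'+1+1), nara j i * nara (n-1-j) (b'+1-i) := by
    intro j
    rw [Polynomial.coeff_mul]
    rw [Finset.Nat.sum_antidiagonal_eq_sum_range_succ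
      (fun x y => (narp j).coeff x * (narp (n-1-j)).coeff y)]
    exact Finset.sum_congr rfl fun i _ => by rw [narp_coeff, narp_coeff]
  simp only [hmul] at h
  rw [show b'+1-1 = b' from rfl]
  linarith [h]

lemma nara_form {j i : ℕ} (hi : 1 ≤ i) (hj : 1 ≤ j) :
    nara j i = (j.choose (i-1) : ℚ) * ((j-1).choose (i-1) : ℚ) / i := by
  obtain ⟨i', rfl⟩ : ∃ i', i = i'+1 := ⟨i-1, by omega⟩
  obtain ⟨j', rfl⟩ : ∃ j', j = j'+1 := ⟨j-1, by omega⟩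
  simp only [show i'+1-1 = i' from rfl, show j'+1-1 = j' from rfl]
  rw [nara, if_neg (by omega)]
  have key : ((j'+1 : ℕ):ℚ) * (j'.choose i' : ℚ)
      = ((j'+1).choose (i'+1) : ℚ) * ((i'+1 : ℕ):ℚ) := by
    exact_mod_cast Nat.add_one_mul_choose_eq j' i'
  have h1 : ((j':ℚ)+1) ≠ 0 := by positivity
  have h2 : ((i':ℚ)+1) ≠ 0 := by positivity
  push_cast
  push_cast at key
  field_simp
  linear_combination (-(((j'+1).choose i' : ℕ) : ℚ)) * key

end StmtAux

/-- A binomial coefficient identity over the rationals. -/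
theorem stmt10 (b n : ℕ) (hb : 2 ≤ b) (hn : 2 ≤ n) :
    ∑ i ∈ Finset.Icc 1 (b - 1), ∑ j ∈ Finset.Icc 1 (n - 2),
        (1 : ℚ) / ((i * (b - i) : ℕ) : ℚ) * (Nat.choose j (i - 1) : ℚ) *
          (Nat.choose (j - 1) (i - 1) : ℚ) * (Nat.choose (n - 1 - j) (b - i - 1) : ℚ) *
          (Nat.choose (n - 2 - j) (b - i - 1) : ℚ) =
      (2 : ℚ) / (b : ℚ) * (Nat.choose (n - 1) (b - 2) : ℚ) *
        (Nat.choose (n - 2) (b - 1) : ℚ) := by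
  have hterm : ∀ i ∈ Finset.Icc 1 (b-1), ∀ j ∈ Finset.Icc 1 (n-2),
      (1 : ℚ) / ((i * (b - i) : ℕ) : ℚ) * (Nat.choose j (i - 1) : ℚ) *
          (Nat.choose (j - 1) (i - 1) : ℚ) * (Nat.choose (n - 1 - j) (b - i - 1) : ℚ) *
          (Nat.choose (n - 2 - j) (b - i - 1) : ℚ)
      = nara j i * nara (n-1-j) (b-i) := by
    intro i hi j hj
    simp only [Finset.mem_Icc] at hi hj
    rw [nara_form (by omega : 1 ≤ i) (by omega : 1 ≤ j),
      nara_form (by omega : 1 ≤ b-i) (by omega : 1 ≤ n-1-j),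
      show n-1-j-1 = n-2-j from by omega]
    have h1 : ((i:ℚ)) ≠ 0 := by
      exact_mod_cast (by omega : i ≠ 0)
    have h2 : ((b-i : ℕ):ℚ) ≠ 0 := by
      exact_mod_cast (by omega : b-i ≠ 0)
    push_cast
    field_simp
  rw [Finset.sum_congr rfl (fun i hi => Finset.sum_congr rfl (fun j hj => hterm i hi j hj)),
    Finset.sum_comm]
  have hinner : ∀ j, ∑ i ∈ Finset.Icc 1 (b-1), nara j i * nara (n-1-j) (b-i)
      = ∑ i ∈ Finset.range (b+1), nara j i * nara (n-1-j) (b-i) := by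
    intro j
    apply Finset.sum_subset
    · intro x hx
      simp only [Finset.mem_Icc] at hx
      simp only [Finset.mem_range]
      omega
    · intro x hx hnx
      simp only [Finset.mem_range] at hx
      simp only [Finset.mem_Icc, not_and, not_le] at hnx
      rcases eq_or_ne x 0 with h0 | h0
      · rw [h0, nara_zero_right, zero_mul]
      · rw [show b - x = 0 from by omega, nara_zero_right, mul_zero]
  simp only [hinner]
  have houter : ∑ j ∈ Finset.Icc 1 (n-2), ∑ i ∈ Finset.range (b+1), nara j i * nara (n-1-j) (b-i)
      = ∑ j ∈ Finset.range n, ∑ i ∈ Finset.range (b+1), nara j i * nara (n-1-j) (b-i) := by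
    apply Finset.sum_subset
    · intro x hx
      simp only [Finset.mem_Icc] at hx
      simp only [Finset.mem_range]
      omega
    · intro x hx hnx
      simp only [Finset.mem_range] at hx
      simp only [Finset.mem_Icc, not_and, not_le] at hnx
      apply Finset.sum_eq_zero
      intro i _
      rcases eq_or_ne x 0 with h0 | h0
      · rw [h0, nara_zero_left, zero_mul]
      · rw [show n-1-x = 0 from by omega, nara_zero_left, mul_zero]
  rw [houter, conv_coeff n b hn (by omega), final_id hb hn]
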